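/- Let f and φ be differentiable convex functions on a convex open set C. Then Lφ − f is convex on C if and only if ⟨∇f(x) − ∇f(y), x − y⟩ ≤ L·(D_φ(x,y) + D_φ(y,x)) for all x, y ∈ C. -/

import Mathlib

open scoped RealInnerProductSpace

open Set

lemma inner_gradient_eq_fderiv' {V : Type*} [NormedAddCommGroup V] [InnerProductSpace ℝ V]
    [CompleteSpace V] (f : V → ℝ) (x v : V) :
    ⟪gradient f x, v⟫ = fderiv ℝ f x v := by
  simp [gradient, InnerProductSpace.toDual_symm_apply]

/-- Derivative of `g` along the segment from `x` to `y`. -/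
lemma hasDerivAt_line {V : Type*} [NormedAddCommGroup V] [NormedSpace ℝ V]
    {g : V → ℝ} (hg : Differentiable ℝ g) (x y : V) (t : ℝ) :
    HasDerivAt (fun t : ℝ => g (x + t • (y - x))) (fderiv ℝ g (x + t • (y - x)) (y - x)) t := by
  have hA : HasDerivAt (fun t : ℝ => x + t • (y - x)) (y - x) t := by
    simpa using ((hasDerivAt_id t).smul_const (y - x)).const_add x
  exact ((hg (x + t • (y - x))).hasFDerivAt).comp_hasDerivAt t hA

/-- On an open convex set, a differentiable function is convex iff its derivative is monotone. -/
lemma convexOn_iff_fderiv_mono {V : Type*} [NormedAddCommGroup V] [NormedSpace ℝ V]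
    (C : Set V) (hC : Convex ℝ C) (hCo : IsOpen C) (g : V → ℝ) (hg : Differentiable ℝ g) :
    ConvexOn ℝ C g ↔ ∀ x ∈ C, ∀ y ∈ C,
      0 ≤ fderiv ℝ g x (x - y) - fderiv ℝ g y (x - y) := by
  constructor
  · intro hconv x hx y hy
    set h : ℝ → ℝ := fun t => g (y + t • (x - y)) with hh
    have hder : ∀ t : ℝ, HasDerivAt h (fderiv ℝ g (y + t • (x - y)) (x - y)) t :=
      hasDerivAt_line hg y x
    have hseg : ∀ t ∈ Icc (0:ℝ) 1, y + t • (x - y) ∈ C := by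
      intro t ht
      have := hC hy hx (by linarith [ht.1, ht.2] : (0:ℝ) ≤ 1 - t) ht.1 (by ring)
      convert this using 1
      module
    have hcomp : ConvexOn ℝ (Icc (0:ℝ) 1) h := by
      refine ⟨convex_Icc 0 1, ?_⟩
      intro s hs t ht a b ha hb hab
      have := hconv.2 (hseg s hs) (hseg t ht) ha hb hab
      have hpt : a • (y + s • (x - y)) + b • (y + t • (x - y))
          = y + (a • s + b • t) • (x - y) := by
        simp only [smul_eq_mul]
        rw [show a = 1 - b by linarith]
        module
      rw [hpt] at this
      simpa [hh] using this
    have hmono := hcomp.monotoneOn_deriv (fun t _ => (hder t).differentiableAt)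
    have h01 := hmono (left_mem_Icc.mpr zero_le_one) (right_mem_Icc.mpr zero_le_one) zero_le_one
    rw [(hder 0).deriv, (hder 1).deriv] at h01
    simp only [zero_smul, add_zero, one_smul] at h01
    rw [show y + (x - y) = x by abel] at h01
    linarith
  · intro hmono
    refine ⟨hC, ?_⟩
    intro x hx y hy a b ha hb hab
    set h : ℝ → ℝ := fun t => g (x + t • (y - x)) with hh
    have hder : ∀ t : ℝ, HasDerivAt h (fderiv ℝ g (x + t • (y - x)) (y - x)) t :=
      hasDerivAt_line hg x y
    have hseg : ∀ t ∈ Icc (0:ℝ) 1, x + t • (y - x) ∈ C := by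
      intro t ht
      have := hC hx hy (by linarith [ht.1, ht.2] : (0:ℝ) ≤ 1 - t) ht.1 (by ring)
      convert this using 1
      module
    have hconvh : ConvexOn ℝ (Icc (0:ℝ) 1) h := by
      apply MonotoneOn.convexOn_of_deriv (convex_Icc 0 1)
      · exact fun t _ => (hder t).differentiableAt.continuousAt.continuousWithinAt
      · exact fun t _ => (hder t).differentiableAt.differentiableWithinAt
      · intro s hs t ht hst
        rw [(hder s).deriv, (hder t).deriv]
        rw [interior_Icc] at hs ht
        have hus : x + s • (y - x) ∈ C := hseg s ⟨hs.1.le, hs.2.le⟩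
        have hut : x + t • (y - x) ∈ C := hseg t ⟨ht.1.le, ht.2.le⟩
        have key := hmono _ hut _ hus
        have hdiff : (x + t • (y - x)) - (x + s • (y - x)) = (t - s) • (y - x) := by
          rw [sub_smul]; abel
        rw [hdiff, map_smul, map_smul, smul_eq_mul, smul_eq_mul] at key
        rcases eq_or_lt_of_le hst with rfl | hlt
        · exact le_rfl
        · nlinarith
    have key := hconvh.2 (left_mem_Icc.mpr zero_le_one) (right_mem_Icc.mpr zero_le_one) ha hb hab
    have h0 : x + (0:ℝ) • (y - x) = x := by simp
    have h1 : x + (1:ℝ) • (y - x) = y := by simp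
    simp only [hh, smul_eq_mul, mul_zero, mul_one, zero_add, h0, h1] at key
    have hb' : a • x + b • y = x + b • (y - x) := by
      rw [show a = 1 - b by linarith]; module
    rw [hb']
    simpa using key

/-- On an open convex set, `Lφ − f` is convex iff
`⟨∇f(x) − ∇f(y), x − y⟩ ≤ L·(D_φ(x,y) + D_φ(y,x))` for all `x, y ∈ C`. -/
theorem stmt_2 {V : Type*} [NormedAddCommGroup V] [InnerProductSpace ℝ V]
    [FiniteDimensional ℝ V]
    (C : Set V) (hC : Convex ℝ C) (hCo : IsOpen C) (f φ : V → ℝ)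
    (hf : Differentiable ℝ f) (hφ : Differentiable ℝ φ)
    (hfc : ConvexOn ℝ C f) (hφc : ConvexOn ℝ C φ) (L : ℝ) :
    ConvexOn ℝ C (fun x => L * φ x - f x) ↔
      ∀ x ∈ C, ∀ y ∈ C,
        ⟪gradient f x - gradient f y, x - y⟫ ≤
          L * ((φ x - φ y - ⟪gradient φ y, x - y⟫) +
               (φ y - φ x - ⟪gradient φ x, y - x⟫)) := by
  have hg : Differentiable ℝ (fun x => L * φ x - f x) := (hφ.const_mul L).sub hf
  rw [convexOn_iff_fderiv_mono C hC hCo _ hg]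
  have hfd : ∀ (x v : V), fderiv ℝ (fun x => L * φ x - f x) x v
      = L * fderiv ℝ φ x v - fderiv ℝ f x v := by
    intro x v
    rw [fderiv_fun_sub ((hφ x).const_mul L) (hf x), fderiv_const_mul (hφ x)]
    simp
  constructor <;> intro H x hx y hy <;> have h := H x hx y hy <;>
    rw [hfd, hfd] at * <;>
    simp only [inner_sub_left, inner_sub_right, inner_gradient_eq_fderiv',
      show y - x = -(x - y) by abel, inner_neg_right, map_neg, map_sub] at * <;>
    linarith
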